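/- (Uniform Approximation) Let ℍ be the hyperbolic plane. For every o ∈ ℍ, r > 0 and ε > 0 there exists T ≥ 0 such that for every ray α : [0,∞) → ℍ with α 0 ∈ closedBall o r, every x, y ∈ closedBall o r and every t ≥ T, one has |B_α(x,y) − (dist x (α t) − dist (α t) y)| ≤ ε. (The Busemann function is approximated by its cocycle uniformly over all rays issuing from a fixed ball and all pairs of points in that ball.) -/

import Mathlib

open Filter UpperHalfPlane Metric

lemma real_key0 (a b p q r s : ℝ) (hb : 0 < b) (hq : 0 < q) (hs : 0 < s)
    (h1 : (r^2+s^2+1)/(2*s) = (p^2+q^2+1)/(2*q))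
    (h2 : ((p-r)^2+q^2+s^2)/(2*q*s) = 2*((p^2+q^2+1)/(2*q))^2 - 1) :
    2 * ((p^2+q^2+1)/(2*q)) * ((a^2+b^2+1)/(2*b))
      ≤ ((a-p)^2+b^2+q^2)/(2*b*q) + ((a-r)^2+b^2+s^2)/(2*b*s) := by
  rw [div_eq_div_iff (by positivity) (by positivity)] at h1
  have h1' : q*(r^2+s^2+1) = s*(p^2+q^2+1) := by linear_combination h1/2
  have hr2 : 2*((p^2+q^2+1)/(2*q))^2 - 1
      = (2*(p^2+q^2+1)^2 - (2*q)^2)/((2*q)^2) := by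
    field_simp
  rw [hr2, div_eq_div_iff (by positivity) (by positivity)] at h2
  have h2' : q*((p-r)^2+q^2+s^2) = s*(p^2+q^2+1)^2 - 2*q^2*s := by
    apply mul_left_cancel₀ (show (4*q:ℝ) ≠ 0 by positivity)
    linear_combination h2
  have hX : 2*q*(p*r) = q*(p^2+q^2) + s*(p^2+q^2) + s - q - s*((p^2+q^2)+1)^2 + 2*q^2*s := by
    linear_combination h1' - h2'
  have hzero : (p^2+q^2+1-2*q) * ((p^2+q^2+1+2*q) * (s*(p^2+q^2)-q)^2) = 0 := by
    linear_combination
      (-((q*(p^2+q^2) + s*(p^2+q^2) + s - q - s*((p^2+q^2)+1)^2 + 2*q^2*s) + 2*q*(p*r))) * hX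
      + (4*q*p^2) * h1'
  rcases mul_eq_zero.mp hzero with h5 | h6
  · have hp : p = 0 := by
      have h7 : p^2 = 0 := le_antisymm (by nlinarith [sq_nonneg (q-1)]) (sq_nonneg p)
      exact sq_eq_zero_iff.mp h7
    have hq1 : q = 1 := by
      have h7 : (q-1)^2 = 0 := le_antisymm (by nlinarith [sq_nonneg p]) (sq_nonneg _)
      have := sq_eq_zero_iff.mp h7; linarith
    subst hp; subst hq1
    have hr : r = 0 := by
      have h7 : r^2 = 0 := le_antisymm (by nlinarith [sq_nonneg (s-1)]) (sq_nonneg r)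
      exact sq_eq_zero_iff.mp h7
    have hs1 : s = 1 := by
      have h7 : (s-1)^2 = 0 := le_antisymm (by nlinarith [sq_nonneg r]) (sq_nonneg _)
      have := sq_eq_zero_iff.mp h7; linarith
    subst hr; subst hs1
    apply le_of_eq
    field_simp
    ring
  · have h8 : (p^2+q^2+1+2*q) ≠ 0 := by positivity
    have hW : (s*(p^2+q^2)-q)^2 = 0 := by
      rcases mul_eq_zero.mp h6 with h | h
      · exact absurd h h8
      · exact h
    have hsu : s*(p^2+q^2) = q := by
      have := sq_eq_zero_iff.mp hW; linarith
    have hspq : s*p + q*r = 0 := by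
      have h9 : (s*p + q*r)^2 = 0 := by
        linear_combination s*hX + q*h1' + (q - s*(p^2+q^2))*hsu
      exact sq_eq_zero_iff.mp h9
    have hfin : s*((a-p)^2+b^2+q^2) + q*((a-r)^2+b^2+s^2)
        = s*((p^2+q^2+1)*(a^2+b^2+1)) := by
      linear_combination (1 - a^2 - b^2)*hsu - 2*a*hspq + h1'
    have e1 : 2*((p^2+q^2+1)/(2*q))*((a^2+b^2+1)/(2*b))
        = (s*((p^2+q^2+1)*(a^2+b^2+1)))/(2*b*q*s) := by
      field_simp
    have e2 : ((a-p)^2+b^2+q^2)/(2*b*q) + ((a-r)^2+b^2+s^2)/(2*b*s)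
        = (s*((a-p)^2+b^2+q^2) + q*((a-r)^2+b^2+s^2))/(2*b*q*s) := by
      field_simp
    rw [e1, e2, hfin]

lemma hyp_key (x z w m : ℍ) (h1 : dist z m = dist m w) (h2 : dist z w = dist z m + dist m w) :
    2 * Real.cosh (dist z m) * Real.cosh (dist x m)
      ≤ Real.cosh (dist x z) + Real.cosh (dist x w) := by
  have hmi : (0:ℝ) < m.im := m.im_pos
  have hxi : (0:ℝ) < x.im := x.im_pos
  have hzi : (0:ℝ) < z.im := z.im_pos
  have hwi : (0:ℝ) < w.im := w.im_pos
  have hd : dist z w = 2 * dist z m := by rw [h2, h1]; ring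
  have hcos2 : Real.cosh (dist z w) = 2 * Real.cosh (dist z m)^2 - 1 := by
    rw [hd, Real.cosh_two_mul, Real.sinh_sq]
    ring
  have Ezm : (((z.re - m.re)/m.im)^2 + (z.im/m.im)^2 + 1)/(2*(z.im/m.im))
      = Real.cosh (dist z m) := by
    rw [cosh_dist']; field_simp
  have Emw : (((w.re - m.re)/m.im)^2 + (w.im/m.im)^2 + 1)/(2*(w.im/m.im))
      = Real.cosh (dist m w) := by
    rw [cosh_dist']; field_simp; ring
  have Exm : (((x.re - m.re)/m.im)^2 + (x.im/m.im)^2 + 1)/(2*(x.im/m.im))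
      = Real.cosh (dist x m) := by
    rw [cosh_dist']; field_simp
  have Exz : (((x.re - m.re)/m.im - (z.re - m.re)/m.im)^2 + (x.im/m.im)^2 + (z.im/m.im)^2)
      /(2*(x.im/m.im)*(z.im/m.im)) = Real.cosh (dist x z) := by
    rw [cosh_dist']; field_simp; ring
  have Exw : (((x.re - m.re)/m.im - (w.re - m.re)/m.im)^2 + (x.im/m.im)^2 + (w.im/m.im)^2)
      /(2*(x.im/m.im)*(w.im/m.im)) = Real.cosh (dist x w) := by
    rw [cosh_dist']; field_simp; ring
  have Ezw : (((z.re - m.re)/m.im - (w.re - m.re)/m.im)^2 + (z.im/m.im)^2 + (w.im/m.im)^2)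
      /(2*(z.im/m.im)*(w.im/m.im)) = Real.cosh (dist z w) := by
    rw [cosh_dist']; field_simp; ring
  have key0 := real_key0 ((x.re - m.re)/m.im) (x.im/m.im) ((z.re - m.re)/m.im) (z.im/m.im)
    ((w.re - m.re)/m.im) (w.im/m.im) (by positivity) (by positivity) (by positivity)
    (by rw [Emw, Ezm, h1]) (by rw [Ezw, Ezm, hcos2])
  rw [← Ezm, ← Exm, ← Exz, ← Exw]
  exact key0

lemma maxprin (c : ℝ) (hc : 1 < c) (K : ℕ) (ψ : ℕ → ℝ) (h0 : ψ 0 ≤ 0) (hK : ψ K ≤ 0)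
    (hmid : ∀ k : ℕ, k + 2 ≤ K → 2*c*ψ (k+1) ≤ ψ k + ψ (k+2)) :
    ∀ k, k ≤ K → ψ k ≤ 0 := by
  by_contra hcon
  push_neg at hcon
  obtain ⟨k₀, hk₀K, hk₀⟩ := hcon
  obtain ⟨j, hjmem, hjmax⟩ := Finset.exists_max_image (Finset.range (K+1)) ψ ⟨0, by simp⟩
  have hjK : j ≤ K := Nat.lt_succ_iff.mp (Finset.mem_range.mp hjmem)
  have hjpos : 0 < ψ j :=
    lt_of_lt_of_le hk₀ (hjmax k₀ (Finset.mem_range.mpr (Nat.lt_succ_iff.mpr hk₀K)))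
  have hj0 : j ≠ 0 := fun h => absurd (h ▸ hjpos) (not_lt.mpr h0)
  have hjKne : j ≠ K := fun h => absurd (h ▸ hjpos) (not_lt.mpr hK)
  obtain ⟨i, rfl⟩ := Nat.exists_eq_succ_of_ne_zero hj0
  have hi2 : i + 2 ≤ K := by omega
  have hb1 : ψ i ≤ ψ (i+1) := hjmax i (Finset.mem_range.mpr (by omega))
  have hb2 : ψ (i+2) ≤ ψ (i+1) := hjmax (i+2) (Finset.mem_range.mpr (by omega))
  have hmm := hmid i hi2
  nlinarith [mul_pos (sub_pos.mpr hc) hjpos]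

lemma ray_cosh_bound (α : ℝ → ℍ)
    (hray : ∀ s t : ℝ, 0 ≤ s → 0 ≤ t → dist (α s) (α t) = |s - t|)
    (x : ℍ) (c : ℝ) (hc : dist x (α 0) ≤ c) (t : ℝ) (ht : 1 ≤ t) (N : ℕ) :
    Real.cosh (dist x (α t)) ≤ Real.cosh (dist x (α (t + N))) * Real.exp (t - (t + N))
      + Real.cosh (c + 1) * Real.exp (1 - t) := by
  have ht0 : (0:ℝ) ≤ t := by linarith
  have hc0 : (0:ℝ) ≤ c := le_trans dist_nonneg hc
  set M : ℕ := ⌊t⌋₊ with hMdef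
  set τ : ℝ := t - M with hτdef
  have hτ0 : 0 ≤ τ := sub_nonneg.mpr (Nat.floor_le ht0)
  have hτ1 : τ ≤ 1 := by
    have := Nat.lt_floor_add_one t
    rw [hτdef]; linarith
  set D : ℝ := dist x (α (t + N)) with hDdef
  set A : ℝ := Real.cosh D * Real.exp (-(t + N)) with hAdef
  set B : ℝ := Real.cosh (c+1) * Real.exp τ with hBdef
  have hτM : τ + (M:ℝ) = t := by rw [hτdef]; ring
  have hτK : τ + ((M+N:ℕ):ℝ) = t + N := by push_cast; rw [hτdef]; ring
  have hA0 : 0 ≤ A := by positivity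
  have hB0 : 0 ≤ B := by positivity
  -- endpoint 0
  have h0 : Real.cosh (dist x (α (τ + ((0:ℕ):ℝ))))
      - (A * Real.exp (τ + ((0:ℕ):ℝ)) + B * Real.exp (-(τ + ((0:ℕ):ℝ)))) ≤ 0 := by
    have hd0 : dist x (α τ) ≤ c + 1 := by
      have h2 := dist_triangle x (α 0) (α τ)
      rw [hray 0 τ le_rfl hτ0] at h2
      have : |0 - τ| = τ := by rw [abs_of_nonpos (by linarith)]; ring
      rw [this] at h2
      linarith
    have hcosh0 : Real.cosh (dist x (α τ)) ≤ Real.cosh (c+1) := by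
      rw [Real.cosh_le_cosh, abs_of_nonneg dist_nonneg, abs_of_nonneg (by linarith)]
      exact hd0
    have e0 : τ + ((0:ℕ):ℝ) = τ := by norm_num
    rw [e0]
    have hBe : B * Real.exp (-τ) = Real.cosh (c+1) := by
      rw [hBdef, mul_assoc, ← Real.exp_add, show τ + -τ = 0 from by ring,
        Real.exp_zero, mul_one]
    have hAe : 0 ≤ A * Real.exp τ := by positivity
    linarith
  -- endpoint K
  have hK : Real.cosh (dist x (α (τ + ((M+N:ℕ):ℝ))))
      - (A * Real.exp (τ + ((M+N:ℕ):ℝ)) + B * Real.exp (-(τ + ((M+N:ℕ):ℝ)))) ≤ 0 := by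
    rw [hτK]
    have hAe : A * Real.exp (t + (N:ℝ)) = Real.cosh D := by
      rw [hAdef, mul_assoc, ← Real.exp_add, show -(t + (N:ℝ)) + (t + (N:ℝ)) = 0 from by ring,
        Real.exp_zero, mul_one]
    rw [hAe]
    have : 0 < B * Real.exp (-(t + (N:ℝ))) := by positivity
    rw [hDdef]
    linarith
  -- interior inequality
  have hmid : ∀ k : ℕ, k + 2 ≤ M + N →
      2*(Real.cosh 1)*(Real.cosh (dist x (α (τ + ((k+1:ℕ):ℝ))))
        - (A * Real.exp (τ + ((k+1:ℕ):ℝ)) + B * Real.exp (-(τ + ((k+1:ℕ):ℝ)))))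
      ≤ (Real.cosh (dist x (α (τ + ((k:ℕ):ℝ))))
        - (A * Real.exp (τ + ((k:ℕ):ℝ)) + B * Real.exp (-(τ + ((k:ℕ):ℝ)))))
      + (Real.cosh (dist x (α (τ + ((k+2:ℕ):ℝ))))
        - (A * Real.exp (τ + ((k+2:ℕ):ℝ)) + B * Real.exp (-(τ + ((k+2:ℕ):ℝ))))) := by
    intro k _
    have hck1 : (τ + ((k+1:ℕ):ℝ)) = (τ + (k:ℝ)) + 1 := by push_cast; ring
    have hck2 : (τ + ((k+2:ℕ):ℝ)) = (τ + (k:ℝ)) + 2 := by push_cast; ring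
    rw [hck1, hck2]
    set s0 : ℝ := τ + (k:ℝ) with hs0def
    have hs00 : 0 ≤ s0 := by positivity
    have d01 : dist (α s0) (α (s0+1)) = 1 := by
      rw [hray s0 (s0+1) hs00 (by linarith)]
      rw [show s0 - (s0+1) = (-1:ℝ) by ring, abs_neg, abs_one]
    have d12 : dist (α (s0+1)) (α (s0+2)) = 1 := by
      rw [hray (s0+1) (s0+2) (by linarith) (by linarith)]
      rw [show s0+1 - (s0+2) = (-1:ℝ) by ring, abs_neg, abs_one]
    have d02 : dist (α s0) (α (s0+2)) = 2 := by
      rw [hray s0 (s0+2) hs00 (by linarith)]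
      rw [show s0 - (s0+2) = (-2:ℝ) by ring, abs_neg]
      norm_num
    have key := hyp_key x (α s0) (α (s0+2)) (α (s0+1))
      (by rw [d01, d12]) (by rw [d02, d01, d12]; norm_num)
    rw [d01] at key
    -- comparison function satisfies the recurrence exactly
    have hFG : Real.exp 1 * Real.exp (-1) = 1 := by
      rw [← Real.exp_add]; norm_num
    have es1 : Real.exp (s0+1) = Real.exp s0 * Real.exp 1 := by rw [← Real.exp_add]
    have es2 : Real.exp (s0+2) = Real.exp s0 * Real.exp 1 * Real.exp 1 := by
      rw [← Real.exp_add, ← Real.exp_add]; congr 1; ring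
    have en1 : Real.exp (-(s0+1)) = Real.exp (-s0) * Real.exp (-1) := by
      rw [← Real.exp_add]; ring_nf
    have en2 : Real.exp (-(s0+2)) = Real.exp (-s0) * Real.exp (-1) * Real.exp (-1) := by
      rw [← Real.exp_add, ← Real.exp_add]; ring_nf
    have hP : (A * Real.exp s0 + B * Real.exp (-s0))
        + (A * Real.exp (s0+2) + B * Real.exp (-(s0+2)))
        = 2*(Real.cosh 1)*(A * Real.exp (s0+1) + B * Real.exp (-(s0+1))) := by
      rw [es1, es2, en1, en2, Real.cosh_eq]
      linear_combination (-(A * Real.exp s0 + B * Real.exp (-s0))) * hFG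
    linarith [key, hP]
  have main := maxprin (Real.cosh 1) (Real.one_lt_cosh.mpr one_ne_zero) (M+N)
    (fun k => Real.cosh (dist x (α (τ + (k:ℝ))))
      - (A * Real.exp (τ + (k:ℝ)) + B * Real.exp (-(τ + (k:ℝ)))))
    h0 hK hmid M (Nat.le_add_right M N)
  rw [hτM] at main
  have hAe : A * Real.exp t = Real.cosh D * Real.exp (t - (t+N)) := by
    rw [hAdef, mul_assoc, ← Real.exp_add, show -(t + (N:ℝ)) + t = t - (t + (N:ℝ)) from by ring]
  have hBe : B * Real.exp (-t) ≤ Real.cosh (c+1) * Real.exp (1-t) := by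
    rw [hBdef, mul_assoc, ← Real.exp_add]
    have : Real.exp (τ + -t) ≤ Real.exp (1 - t) := Real.exp_le_exp.mpr (by linarith)
    nlinarith [Real.cosh_pos (c+1), this]
  rw [hDdef] at hAe
  nlinarith [main, hAe, hBe]

lemma ray_excess (α : ℝ → ℍ)
    (hray : ∀ s t : ℝ, 0 ≤ s → 0 ≤ t → dist (α s) (α t) = |s - t|)
    (x : ℍ) (c : ℝ) (hc : dist x (α 0) ≤ c) (t : ℝ) (ht : 1 ≤ t) (N : ℕ) :
    Real.exp (dist x (α t) + N - dist x (α (t + N)))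
      ≤ 1 + (Real.exp (2*c) + 2*Real.cosh (c+1)*Real.exp (1+c)) * Real.exp (-(2*t)) := by
  have ht0 : (0:ℝ) ≤ t := by linarith
  have hu0 : (0:ℝ) ≤ t + N := by positivity
  have hb := ray_cosh_bound α hray x c hc t ht N
  set d : ℝ := dist x (α t) with hddef
  set D : ℝ := dist x (α (t + N)) with hDdef
  have hDl : t + N - c ≤ D := by
    have h1 : dist (α 0) (α (t+N)) = t + N := by
      rw [hray 0 (t+N) le_rfl hu0, abs_of_nonpos (by linarith)]; ring
    have h2 := dist_triangle (α 0) x (α (t+N))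
    rw [h1, dist_comm (α 0) x] at h2
    linarith
  have hed : Real.exp d ≤ 2 * Real.cosh d := by
    rw [Real.cosh_eq]
    have := Real.exp_pos (-d)
    linarith
  have step1 : Real.exp d * Real.exp ((N:ℝ) - D)
      ≤ (Real.cosh D * Real.exp (t - (t+N)) + Real.cosh (c+1) * Real.exp (1-t))
        * (2 * Real.exp ((N:ℝ) - D)) := by
    have hexp0 : 0 ≤ Real.exp ((N:ℝ) - D) := (Real.exp_pos _).le
    nlinarith [hed, hb, Real.cosh_pos D, Real.cosh_pos (c+1), Real.exp_pos ((N:ℝ) - D),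
      mul_le_mul_of_nonneg_right hb hexp0, mul_le_mul_of_nonneg_right hed hexp0]
  have eleft : Real.exp d * Real.exp ((N:ℝ) - D) = Real.exp (d + N - D) := by
    rw [← Real.exp_add]; congr 1; ring
  have emid : (Real.cosh D * Real.exp (t - (t+N)) + Real.cosh (c+1) * Real.exp (1-t))
        * (2 * Real.exp ((N:ℝ) - D))
      = (1 + Real.exp (-(2*D))) + 2*Real.cosh (c+1) * Real.exp (1 - t + ((N:ℝ) - D)) := by
    rw [Real.cosh_eq D]
    have e1 : Real.exp D * (Real.exp (t - (t+N)) * Real.exp ((N:ℝ) - D)) = 1 := by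
      rw [← Real.exp_add, ← Real.exp_add, show D + (t - (t+(N:ℝ)) + ((N:ℝ) - D)) = 0 from by ring,
        Real.exp_zero]
    have e2 : Real.exp (-D) * (Real.exp (t - (t+N)) * Real.exp ((N:ℝ) - D))
        = Real.exp (-(2*D)) := by
      rw [← Real.exp_add, ← Real.exp_add]
      congr 1; ring
    have e3 : Real.exp (1-t) * Real.exp ((N:ℝ) - D) = Real.exp (1 - t + ((N:ℝ) - D)) := by
      rw [← Real.exp_add]
    linear_combination e1 + e2 + 2*Real.cosh (c+1)*e3
  have ebound : (1 + Real.exp (-(2*D))) + 2*Real.cosh (c+1) * Real.exp (1 - t + ((N:ℝ) - D))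
      ≤ 1 + (Real.exp (2*c) + 2*Real.cosh (c+1)*Real.exp (1+c)) * Real.exp (-(2*t)) := by
    have b1 : Real.exp (-(2*D)) ≤ Real.exp (2*c) * Real.exp (-(2*t)) := by
      rw [← Real.exp_add]
      apply Real.exp_le_exp.mpr
      have : (0:ℝ) ≤ N := Nat.cast_nonneg N
      linarith
    have b2 : Real.exp (1 - t + ((N:ℝ) - D)) ≤ Real.exp (1+c) * Real.exp (-(2*t)) := by
      rw [← Real.exp_add]
      apply Real.exp_le_exp.mpr
      linarith
    have b2' := mul_le_mul_of_nonneg_left b2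
      (by positivity : (0:ℝ) ≤ 2*Real.cosh (c+1))
    linarith [b1, b2']
  calc Real.exp (d + N - D) = Real.exp d * Real.exp ((N:ℝ) - D) := eleft.symm
    _ ≤ _ := step1
    _ = _ := emid
    _ ≤ _ := ebound

/-- **Uniform Approximation.** In the hyperbolic plane, for every ball
`closedBall o r` and every `ε > 0` there is `T ≥ 0` such that for every ray `α` issuing
from the ball, every `x, y` in the ball and every `t ≥ T`, the Busemann function of `α`
is `ε`-approximated by its cocycle: `|B_α(x,y) − (dist x (α t) − dist (α t) y)| ≤ ε`. -/
theorem busemann_uniform_approximation (o : ℍ) (r ε : ℝ) (hr : 0 < r) (hε : 0 < ε) :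
    ∃ T : ℝ, 0 ≤ T ∧
      ∀ α : ℝ → ℍ,
        (∀ s t : ℝ, 0 ≤ s → 0 ≤ t → dist (α s) (α t) = |s - t|) →
        α 0 ∈ closedBall o r →
        ∀ x ∈ closedBall o r, ∀ y ∈ closedBall o r, ∀ L : ℝ,
          Tendsto (fun t : ℝ => dist x (α t) - dist (α t) y) atTop (nhds L) →
          ∀ t : ℝ, T ≤ t → |L - (dist x (α t) - dist (α t) y)| ≤ ε := by
  set c : ℝ := 2*r with hcdef
  have hc0 : 0 < c := by positivity
  set Kc : ℝ := Real.exp (2*c) + 2*Real.cosh (c+1)*Real.exp (1+c) with hKcdef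
  have hKc0 : 0 < Kc := by positivity
  refine ⟨max (c+1) (Real.log (2*Kc/ε)), le_trans (by linarith) (le_max_left _ _), ?_⟩
  intro α hray hα0 x hx y hy L hL t htT
  have ht1 : 1 ≤ t := le_trans (by linarith [le_max_left (c+1) (Real.log (2*Kc/ε))]) htT
  have ht0 : 0 ≤ t := by linarith
  have hcx : dist x (α 0) ≤ c := by
    have h1 := dist_triangle x o (α 0)
    have h2 : dist x o ≤ r := mem_closedBall.mp hx
    have h3 : dist o (α 0) ≤ r := by
      rw [dist_comm]; exact mem_closedBall.mp hα0
    rw [hcdef]; linarith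
  have hcy : dist y (α 0) ≤ c := by
    have h1 := dist_triangle y o (α 0)
    have h2 : dist y o ≤ r := mem_closedBall.mp hy
    have h3 : dist o (α 0) ≤ r := by
      rw [dist_comm]; exact mem_closedBall.mp hα0
    rw [hcdef]; linarith
  have hsmall : Kc * Real.exp (-(2*t)) ≤ ε/2 := by
    have hlogT : Real.log (2*Kc/ε) ≤ t := le_trans (le_max_right _ _) htT
    have h1 : Real.exp (-t) ≤ ε/(2*Kc) := by
      calc Real.exp (-t) ≤ Real.exp (-(Real.log (2*Kc/ε))) := Real.exp_le_exp.mpr (by linarith)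
        _ = ε/(2*Kc) := by
          rw [Real.exp_neg, Real.exp_log (by positivity), inv_div]
    have h2 : Real.exp (-t) ≤ 1 := Real.exp_le_one_iff.mpr (by linarith)
    have h3 : Real.exp (-(2*t)) = Real.exp (-t) * Real.exp (-t) := by
      rw [← Real.exp_add]; ring_nf
    calc Kc * Real.exp (-(2*t)) = Kc * (Real.exp (-t) * Real.exp (-t)) := by rw [h3]
      _ ≤ Kc * ((ε/(2*Kc)) * 1) := by
          apply mul_le_mul_of_nonneg_left _ hKc0.le
          exact mul_le_mul h1 h2 (Real.exp_pos _).le (by positivity)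
      _ = ε/2 := by
          rw [mul_one, mul_comm 2 Kc, ← mul_div_assoc,
            mul_div_mul_left ε 2 (ne_of_gt hKc0)]
  -- per-N excess bounds
  have hEx : ∀ (z : ℍ), dist z (α 0) ≤ c → ∀ N : ℕ,
      dist z (α t) + N - dist z (α (t+N)) ≤ ε/2 := by
    intro z hz N
    have he := ray_excess α hray z c hz t ht1 N
    have h2 : Real.exp (dist z (α t) + N - dist z (α (t+N))) ≤ Real.exp (ε/2) := by
      calc Real.exp (dist z (α t) + N - dist z (α (t+N)))
          ≤ 1 + Kc * Real.exp (-(2*t)) := he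
        _ ≤ 1 + ε/2 := by linarith
        _ ≤ Real.exp (ε/2) := by linarith [Real.add_one_le_exp (ε/2)]
    exact Real.exp_le_exp.mp h2
  have hExnn : ∀ (z : ℍ), ∀ N : ℕ, 0 ≤ dist z (α t) + N - dist z (α (t+N)) := by
    intro z N
    have h1 := dist_triangle z (α t) (α (t+N))
    have h2 : dist (α t) (α (t+N)) = N := by
      rw [hray t (t+N) ht0 (by positivity), show t - (t+(N:ℝ)) = -(N:ℝ) by ring,
        abs_neg, abs_of_nonneg (Nat.cast_nonneg N)]
    rw [h2] at h1
    linarith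
  have hdiff : ∀ N : ℕ,
      |(dist x (α t) - dist (α t) y) - (dist x (α (t+N)) - dist (α (t+N)) y)| ≤ ε/2 := by
    intro N
    rw [abs_le]
    have hxN := hEx x hcx N
    have hyN := hEx y hcy N
    have hxnn := hExnn x N
    have hynn := hExnn y N
    rw [dist_comm (α t) y, dist_comm (α (t+N)) y]
    constructor <;> linarith
  have hlim : Tendsto (fun N : ℕ => dist x (α (t+N)) - dist (α (t+N)) y) atTop (nhds L) :=
    hL.comp (tendsto_atTop_add_const_left atTop t tendsto_natCast_atTop_atTop)
  have habs : Tendsto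
      (fun N : ℕ => |(dist x (α t) - dist (α t) y) - (dist x (α (t+N)) - dist (α (t+N)) y)|)
      atTop (nhds |(dist x (α t) - dist (α t) y) - L|) :=
    (tendsto_const_nhds.sub hlim).abs
  have hfin : |(dist x (α t) - dist (α t) y) - L| ≤ ε/2 :=
    le_of_tendsto habs (Filter.Eventually.of_forall hdiff)
  rw [abs_sub_comm] at hfin
  linarith
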